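/- For all u ∈ ℕ+ and j,l ∈ ℕ+, in the abelian subalgebra spanned by the h_m^Γ: p^Γ_u(j,l) := [x_j^{Γ,+}, D^{Γ,-}_{u−1,1}(j,l)] = Σ_{k=0}^{⌊(u−1)/2⌋} Σ_{i=0}^{u} (−1)^{k+i} C(u,k) C(u,i) h^Γ_{(u−2i)j+(u−2k)l} + [u even]·Σ_{i=0}^{u} (−1)^{u/2+i} C(u−1,(u−2)/2) C(u,i) h^Γ_{(u−2i)j}, with convention h^Γ_{−m} = h^Γ_m. -/

import Mathlib

open Finset

noncomputable section

/- Setting: `A` plays the role of the universal enveloping algebra `U(O)` of the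
Onsager algebra.  `X m = x_m^{Γ,+}`, `Y m = x_m^{Γ,-}`, `H m = h_m^Γ` (indexed by `ℤ`
via the conventions `x_{-m}^{Γ,±} = -x_m^{Γ,±}`, `x_0^{Γ,±} = 0`, `h_{-m}^Γ = h_m^Γ`),
and the Lie brackets of `O` are imposed as commutator relations. -/
variable {A : Type*} [Ring A] [Algebra ℂ A]

/-- `Λ^Γ_{j,l,1} = -(h^Γ_{j+l} - h^Γ_{j-l})`. -/
def Lam1 (H : ℤ → A) (j l : ℤ) : A := -(H (j + l) - H (j - l))

/-- `D^{Γ,+}_{u,1}(j,l)`. -/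
def Dp (X H : ℤ → A) (j l : ℤ) : ℕ → A
  | 0 => X j
  | u + 1 => ((1 : ℂ) / 2) • ⁅Dp X H j l u, Lam1 H j l⁆

/-- `D^{Γ,-}_{u,1}(j,l)`. -/
def Dm (Y H : ℤ → A) (j l : ℤ) : ℕ → A
  | 0 => Y l
  | u + 1 => (-((1 : ℂ) / 2)) • ⁅Dm Y H j l u, Lam1 H j l⁆

/-- `p^Γ_s(j,l) = [x_j^{Γ,+}, D^{Γ,-}_{s-1,1}(j,l)]`. -/
def pG (X Y H : ℤ → A) (j l : ℤ) (s : ℕ) : A := ⁅X j, Dm Y H j l (s - 1)⁆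

/-- `Λ^Γ_{j,l,n}`, via the recursion `n Λ_n = -∑_{i=1}^n p_i Λ_{n-i}` equivalent to the
exponential generating series definition. -/
def Lam (X Y H : ℤ → A) (j l : ℤ) : ℕ → A
  | 0 => 1
  | n + 1 =>
      (-(((n : ℂ) + 1)⁻¹)) •
        ∑ i ∈ Finset.range (n + 1), pG X Y H j l (i + 1) * Lam X Y H j l (n - i)
  decreasing_by omega

/-- `D^{Γ,+}_{u,v}(j,l)`. -/
def DvP (X H : ℤ → A) (j l : ℤ) : ℕ → ℕ → A
  | u, 0 => if u = 0 then 1 else 0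
  | u, v + 1 =>
      (((v : ℂ) + 1)⁻¹) • ∑ i ∈ Finset.range (u + 1), Dp X H j l i * DvP X H j l (u - i) v

/-- `D^{Γ,-}_{u,v}(j,l)`. -/
def DvM (Y H : ℤ → A) (j l : ℤ) : ℕ → ℕ → A
  | u, 0 => if u = 0 then 1 else 0
  | u, v + 1 =>
      (((v : ℂ) + 1)⁻¹) • ∑ i ∈ Finset.range (u + 1), Dm Y H j l i * DvM Y H j l (u - i) v

section lieinst

attribute [local instance] LieRing.ofAssociativeRing

section comb

variable {M : Type*} [AddCommGroup M]

lemma pascal_sum (s : ℕ) (w : ℕ → M) :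
    ∑ i ∈ range (s + 1), ((-1 : ℤ) ^ i * s.choose i) • (w i - w (i + 1))
      = ∑ i ∈ range (s + 2), ((-1 : ℤ) ^ i * (s + 1).choose i) • w i := by
  have h1 : ∀ i ∈ range (s+1),
      ((-1 : ℤ) ^ i * s.choose i) • (w i - w (i + 1))
        = ((-1 : ℤ) ^ i * s.choose i) • w i - ((-1 : ℤ) ^ i * s.choose i) • w (i+1) := by
    intro i _; rw [smul_sub]
  rw [Finset.sum_congr rfl h1, Finset.sum_sub_distrib]
  rw [Finset.sum_range_succ' (fun i => ((-1 : ℤ) ^ i * (s + 1).choose i) • w i) (s+1)]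
  have h2 : ∀ i ∈ range (s+1),
      ((-1 : ℤ) ^ (i+1) * (s + 1).choose (i+1)) • w (i+1)
        = -(((-1 : ℤ) ^ i * s.choose i) • w (i+1)) + -(((-1 : ℤ) ^ i * s.choose (i+1)) • w (i+1)) := by
    intro i _
    have hc : ((-1 : ℤ) ^ (i+1) * ((s+1).choose (i+1)))
        = -((-1 : ℤ)^i * s.choose i) + -((-1 : ℤ)^i * s.choose (i+1)) := by
      rw [Nat.choose_succ_succ]
      push_cast
      ring
    rw [hc, add_smul, neg_smul, neg_smul]
  rw [Finset.sum_congr rfl h2, Finset.sum_add_distrib]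
  have h3 : ∑ i ∈ range (s+1), ((-1 : ℤ) ^ i * s.choose i) • w i
      = ((-1 : ℤ) ^ 0 * (s+1).choose 0) • w 0
        - ∑ i ∈ range (s+1), (((-1 : ℤ) ^ i * (s.choose (i+1) : ℤ)) • w (i+1)) := by
    rw [Finset.sum_range_succ' (fun i => ((-1 : ℤ) ^ i * s.choose i) • w i) s]
    rw [Finset.sum_range_succ (fun i => (((-1 : ℤ) ^ i * (s.choose (i+1) : ℤ)) • w (i+1))) s]
    simp [Nat.choose_succ_self, pow_succ]
    abel
  rw [h3, Finset.sum_neg_distrib, Finset.sum_neg_distrib]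
  abel

lemma pascal2 (s : ℕ) (W : ℕ → ℕ → M) :
    ∑ i ∈ range (s + 1), ∑ k ∈ range (s + 1),
        ((-1 : ℤ) ^ (i + k) * s.choose i * s.choose k) •
          (W i k + W (i+1) (k+1) - W i (k+1) - W (i+1) k)
      = ∑ i ∈ range (s + 2), ∑ k ∈ range (s + 2),
          ((-1 : ℤ) ^ (i + k) * (s+1).choose i * (s+1).choose k) • W i k := by
  have key : ∀ (V : ℕ → M), ∑ k ∈ range (s+1),
      ((-1 : ℤ) ^ k * s.choose k) • (V k - V (k+1))
        = ∑ k ∈ range (s+2), ((-1 : ℤ) ^ k * (s+1).choose k) • V k := pascal_sum s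
  calc ∑ i ∈ range (s + 1), ∑ k ∈ range (s + 1),
        ((-1 : ℤ) ^ (i + k) * s.choose i * s.choose k) •
          (W i k + W (i+1) (k+1) - W i (k+1) - W (i+1) k)
      = ∑ i ∈ range (s + 1), ((-1 : ℤ) ^ i * s.choose i) • ∑ k ∈ range (s + 1),
          ((-1 : ℤ) ^ k * s.choose k) •
            ((W i k - W (i+1) k) - (W i (k+1) - W (i+1) (k+1))) := by
        refine Finset.sum_congr rfl fun i _ => ?_
        rw [Finset.smul_sum]
        refine Finset.sum_congr rfl fun k _ => ?_
        rw [← mul_smul]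
        have : ((-1 : ℤ) ^ (i + k) * s.choose i * s.choose k)
            = ((-1 : ℤ) ^ i * s.choose i) * ((-1 : ℤ) ^ k * s.choose k) := by
          rw [pow_add]; ring
        rw [this]
        congr 1
        abel
    _ = ∑ i ∈ range (s + 1), ((-1 : ℤ) ^ i * s.choose i) •
          ((∑ k ∈ range (s+2), ((-1 : ℤ) ^ k * (s+1).choose k) • W i k)
            - (∑ k ∈ range (s+2), ((-1 : ℤ) ^ k * (s+1).choose k) • W (i+1) k)) := by
        refine Finset.sum_congr rfl fun i _ => ?_
        congr 1
        have h4 := key (fun k => W i k - W (i+1) k)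
        rw [h4, ← Finset.sum_sub_distrib]
        exact Finset.sum_congr rfl fun k _ => smul_sub _ _ _
    _ = ∑ i ∈ range (s + 2), ((-1 : ℤ) ^ i * (s+1).choose i) •
          ∑ k ∈ range (s+2), ((-1 : ℤ) ^ k * (s+1).choose k) • W i k := by
        exact key (fun i => ∑ k ∈ range (s+2), ((-1 : ℤ) ^ k * (s+1).choose k) • W i k)
    _ = ∑ i ∈ range (s + 2), ∑ k ∈ range (s + 2),
          ((-1 : ℤ) ^ (i + k) * (s+1).choose i * (s+1).choose k) • W i k := by
        refine Finset.sum_congr rfl fun i _ => ?_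
        rw [Finset.smul_sum]
        refine Finset.sum_congr rfl fun k _ => ?_
        rw [← mul_smul]
        congr 1
        rw [pow_add]; ring

variable {M : Type*} [AddCommGroup M]

lemma neg_one_pow_congr_mod (a b : ℕ) (h : a % 2 = b % 2) : ((-1:ℤ))^a = (-1)^b := by
  rw [neg_one_pow_eq_pow_mod_two, h, ← neg_one_pow_eq_pow_mod_two]

lemma split_reflect (u a : ℕ) (hle : a ≤ u) (F : ℕ → M)
    (hsym : ∀ k, k ≤ u → F (u - k) = ((-1:ℤ)^u) • F k) :
    ∑ k ∈ range u, ((-1:ℤ)^k * (u-1).choose k) • F k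
      = ∑ k ∈ range a, ((-1:ℤ)^k * (u-1).choose k) • F k
        + ∑ k ∈ range (u - a), ((-1:ℤ)^(k+1) * (u-1).choose k) • F (k+1) := by
  have hsum := Finset.sum_range_add (fun k => ((-1:ℤ)^k * ((u-1).choose k : ℤ)) • F k) a (u - a)
  rw [show a + (u - a) = u by omega] at hsum
  rw [hsum]
  congr 1
  rw [← Finset.sum_range_reflect (fun k => ((-1:ℤ)^(a+k) * ((u-1).choose (a+k) : ℤ)) • F (a+k)) (u-a)]
  refine Finset.sum_congr rfl fun k hk => ?_
  rw [Finset.mem_range] at hk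
  have h1 : a + (u - a - 1 - k) = u - (k+1) := by omega
  simp only [h1]
  rw [hsym (k+1) (by omega), smul_smul]
  rw [show u - (k+1) = (u - 1) - k by omega, Nat.choose_symm (show k ≤ u - 1 by omega)]
  congr 1
  have hpow : ((-1:ℤ))^(u-1-k) * (-1)^u = (-1)^(k+1) := by
    rw [← pow_add]
    exact neg_one_pow_congr_mod (u-1-k+u) (k+1) (by omega)
  rw [mul_right_comm, hpow]

lemma pascal_combine (s n : ℕ) (F : ℕ → M) :
    ∑ k ∈ range (n+1), ((-1:ℤ)^k * s.choose k) • F k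
      + ∑ k ∈ range n, ((-1:ℤ)^(k+1) * s.choose k) • F (k+1)
    = ∑ k ∈ range (n+1), ((-1:ℤ)^k * (s+1).choose k) • F k := by
  rw [Finset.sum_range_succ' (fun k => ((-1:ℤ)^k * (s.choose k : ℤ)) • F k) n,
    Finset.sum_range_succ' (fun k => ((-1:ℤ)^k * ((s+1).choose k : ℤ)) • F k) n]
  simp only [Nat.choose_zero_right, pow_zero, one_mul]
  rw [add_right_comm, ← Finset.sum_add_distrib]
  congr 1
  refine Finset.sum_congr rfl fun k _ => ?_
  rw [← add_smul]
  congr 1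
  rw [Nat.choose_succ_succ']
  push_cast
  ring

lemma fold_sum (u : ℕ) (hu : 1 ≤ u) (F : ℕ → M)
    (hsym : ∀ k, k ≤ u → F (u - k) = ((-1:ℤ)^u) • F k) :
    ∑ k ∈ range u, ((-1:ℤ)^k * (u-1).choose k) • F k
      = (∑ k ∈ range ((u+1)/2), ((-1:ℤ)^k * u.choose k) • F k)
        + (if Even u then ((-1:ℤ)^(u/2) * ((u-1).choose ((u-2)/2))) • F (u/2) else 0) := by
  rcases Nat.even_or_odd u with he | ho
  · obtain ⟨t, ht⟩ := he
    have ht1 : 1 ≤ t := by omega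
    rw [if_pos (by exact ⟨t, ht⟩), show (u+1)/2 = t by omega, show u/2 = t by omega,
      show (u-2)/2 = t - 1 by omega]
    rw [split_reflect u t (by omega) F hsym, show u - t = t by omega]
    have hpeel := Finset.sum_range_succ
      (fun k => ((-1:ℤ)^(k+1) * ((u-1).choose k : ℤ)) • F (k+1)) (t-1)
    rw [show t - 1 + 1 = t by omega] at hpeel
    rw [hpeel, ← add_assoc]
    congr 1
    have hc := pascal_combine (u-1) (t-1) F
    rw [show t - 1 + 1 = t by omega, show u - 1 + 1 = u by omega] at hc
    rw [hc]
  · obtain ⟨t, ht⟩ := ho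
    rw [if_neg ((Nat.not_even_iff_odd).mpr ⟨t, by omega⟩), add_zero,
      show (u+1)/2 = t+1 by omega]
    rw [split_reflect u (t+1) (by omega) F hsym, show u - (t+1) = t by omega]
    have hc := pascal_combine (u-1) t F
    rw [show u - 1 + 1 = u by omega] at hc
    exact hc
end comb

lemma my_lie_sum {ι : Type*} (x : A) (s : Finset ι) (f : ι → A) :
    ⁅x, ∑ i ∈ s, f i⁆ = ∑ i ∈ s, ⁅x, f i⁆ := by
  induction s using Finset.cons_induction with
  | empty => simp
  | cons a s ha ih => simp [Finset.sum_cons, lie_add, ih]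

lemma my_sum_lie {ι : Type*} (x : A) (s : Finset ι) (f : ι → A) :
    ⁅∑ i ∈ s, f i, x⁆ = ∑ i ∈ s, ⁅f i, x⁆ := by
  induction s using Finset.cons_induction with
  | empty => simp
  | cons a s ha ih => simp [Finset.sum_cons, add_lie, ih]

lemma bracket_Y (Y H : ℤ → A)
    (hHY : ∀ k l : ℤ, ⁅H k, Y l⁆ = -(2 • (Y (l + k) + Y (l - k)))) (j l m : ℤ) :
    (-((1 : ℂ) / 2)) • ⁅Y m, Lam1 H j l⁆
      = Y (m + (j + l)) + Y (m - (j + l)) - Y (m + (j - l)) - Y (m - (j - l)) := by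
  have hhalf : ∀ x : A, (-((1:ℂ)/2)) • ((2:ℕ) • x) = -x := by
    intro x
    rw [two_smul, smul_add, ← add_smul]
    norm_num
  rw [Lam1, lie_neg, lie_sub, ← lie_skew (Y m) (H (j+l)), ← lie_skew (Y m) (H (j-l)),
    hHY, hHY]
  rw [neg_sub, sub_eq_add_neg, smul_add, neg_neg, neg_neg, smul_neg, hhalf, hhalf]
  abel

lemma Dm_formula (Y H : ℤ → A)
    (hHY : ∀ k l : ℤ, ⁅H k, Y l⁆ = -(2 • (Y (l + k) + Y (l - k)))) (j l : ℤ) (s : ℕ) :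
    Dm Y H j l s = ∑ i ∈ range (s+1), ∑ k ∈ range (s+1),
      ((-1:ℤ)^(i+k) * s.choose i * s.choose k) •
        Y (((s:ℤ) - 2*i)*j + ((s:ℤ) - 2*k)*l + l) := by
  induction s with
  | zero => simp [Dm]
  | succ s ih =>
    rw [show Dm Y H j l (s+1) = (-((1 : ℂ) / 2)) • ⁅Dm Y H j l s, Lam1 H j l⁆ from rfl, ih,
      my_sum_lie, Finset.smul_sum]
    have hterm : ∀ i ∈ range (s+1), (-((1:ℂ)/2)) •
        ⁅∑ k ∈ range (s+1), ((-1:ℤ)^(i+k) * s.choose i * s.choose k) •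
            Y (((s:ℤ) - 2*i)*j + ((s:ℤ) - 2*k)*l + l), Lam1 H j l⁆
        = ∑ k ∈ range (s+1), ((-1:ℤ)^(i+k) * s.choose i * s.choose k) •
            ((fun (i k : ℕ) => Y ((((s:ℤ)+1) - 2*(i:ℤ))*j + (((s:ℤ)+1) - 2*(k:ℤ))*l + l)) i k
              + (fun (i k : ℕ) => Y ((((s:ℤ)+1) - 2*(i:ℤ))*j + (((s:ℤ)+1) - 2*(k:ℤ))*l + l)) (i+1) (k+1)
              - (fun (i k : ℕ) => Y ((((s:ℤ)+1) - 2*(i:ℤ))*j + (((s:ℤ)+1) - 2*(k:ℤ))*l + l)) i (k+1)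
              - (fun (i k : ℕ) => Y ((((s:ℤ)+1) - 2*(i:ℤ))*j + (((s:ℤ)+1) - 2*(k:ℤ))*l + l)) (i+1) k) := by
      intro i _
      rw [my_sum_lie, Finset.smul_sum]
      refine Finset.sum_congr rfl fun k _ => ?_
      rw [zsmul_lie, smul_comm, bracket_Y Y H hHY j l]
      congr 1
      simp only
      congr 3 <;> push_cast <;> ring
    rw [Finset.sum_congr rfl hterm, pascal2 s
      (fun (i k : ℕ) => Y ((((s:ℤ)+1) - 2*(i:ℤ))*j + (((s:ℤ)+1) - 2*(k:ℤ))*l + l))]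
    refine Finset.sum_congr rfl fun i _ => Finset.sum_congr rfl fun k _ => ?_
    congr 2 <;> push_cast <;> ring

end lieinst

theorem p_u_formula (X Y H : ℤ → A)
    (hXneg : ∀ m : ℤ, X (-m) = -X m) (hX0 : X 0 = 0)
    (hYneg : ∀ m : ℤ, Y (-m) = -Y m) (hY0 : Y 0 = 0)
    (hHneg : ∀ m : ℤ, H (-m) = H m)
    (hXY : ∀ j l : ℤ, ⁅X j, Y l⁆ = H (j + l) - H (j - l))
    (hHX : ∀ k j : ℤ, ⁅H k, X j⁆ = 2 • (X (j + k) - X (k - j)))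
    (hHY : ∀ k l : ℤ, ⁅H k, Y l⁆ = -(2 • (Y (l + k) + Y (l - k))))
    (hHH : ∀ k m : ℤ, ⁅H k, H m⁆ = 0)
    (u : ℕ) (hu : 1 ≤ u) (j l : ℕ+) :
    pG X Y H ((j : ℕ) : ℤ) ((l : ℕ) : ℤ) u =
      (∑ k ∈ Finset.range ((u + 1) / 2), ∑ i ∈ Finset.range (u + 1),
        ((-1 : ℤ) ^ (k + i) * (u.choose k : ℤ) * (u.choose i : ℤ)) •
          H (((u : ℤ) - 2 * i) * ((j : ℕ) : ℤ) + ((u : ℤ) - 2 * k) * ((l : ℕ) : ℤ)))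
      + (if Even u then
          ∑ i ∈ Finset.range (u + 1),
            ((-1 : ℤ) ^ (u / 2 + i) * ((u - 1).choose ((u - 2) / 2) : ℤ) * (u.choose i : ℤ)) •
              H (((u : ℤ) - 2 * i) * ((j : ℕ) : ℤ))
        else 0) := by
  letI : LieRing A := LieRing.ofAssociativeRing
  obtain ⟨t, rfl⟩ : ∃ t, u = t + 1 := ⟨u - 1, by omega⟩
  set j' : ℤ := ((j : ℕ) : ℤ) with hj'
  set l' : ℤ := ((l : ℕ) : ℤ) with hl'
  have smulcongr : ∀ (a b : ℤ) (x y : A), a = b → x = y → a • x = b • y := by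
    intro a b x y h1 h2; rw [h1, h2]
  set V : ℕ → ℕ → A :=
    fun k i => H ((((t : ℤ) + 1) - 2 * (i : ℤ)) * j' + (((t : ℤ) + 1) - 2 * (k : ℤ)) * l')
    with hV
  set G : ℕ → A :=
    fun k => ∑ i ∈ Finset.range (t + 2), ((-1 : ℤ) ^ i * ((t + 1).choose i : ℤ)) • V k i
    with hG
  have key1 : ∀ i k : ℕ, ⁅X j', Y (((t : ℤ) - 2 * i) * j' + ((t : ℤ) - 2 * k) * l' + l')⁆
      = V k i - V k (i + 1) := by
    intro i k
    rw [hXY]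
    congr 1
    · simp only [hV]
      exact congrArg H (by push_cast; ring)
    · rw [(show j' - (((t : ℤ) - 2 * i) * j' + ((t : ℤ) - 2 * k) * l' + l')
          = -(((((t : ℤ) + 1) - 2 * ((i : ℤ) + 1)) * j' + (((t : ℤ) + 1) - 2 * (k : ℤ)) * l'))
            by push_cast; ring), hHneg]
      simp only [hV]
      exact congrArg H (by push_cast; ring)
  have hA : pG X Y H j' l' (t + 1)
      = ∑ k ∈ Finset.range (t + 1), ((-1 : ℤ) ^ k * (t.choose k : ℤ)) • G k := by
    have h0 : pG X Y H j' l' (t + 1) = ⁅X j', Dm Y H j' l' t⁆ := by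
      simp [pG]
    rw [h0, Dm_formula Y H hHY j' l' t, my_lie_sum]
    calc ∑ i ∈ range (t + 1), ⁅X j', ∑ k ∈ range (t + 1),
            ((-1 : ℤ) ^ (i + k) * (t.choose i : ℤ) * (t.choose k : ℤ)) •
              Y (((t : ℤ) - 2 * i) * j' + ((t : ℤ) - 2 * k) * l' + l')⁆
        = ∑ i ∈ range (t + 1), ∑ k ∈ range (t + 1),
            ((-1 : ℤ) ^ (i + k) * (t.choose i : ℤ) * (t.choose k : ℤ)) •
              (V k i - V k (i + 1)) := by
          refine Finset.sum_congr rfl fun i _ => ?_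
          rw [my_lie_sum]
          refine Finset.sum_congr rfl fun k _ => ?_
          rw [lie_zsmul, key1]
      _ = ∑ k ∈ range (t + 1), ∑ i ∈ range (t + 1),
            ((-1 : ℤ) ^ (i + k) * (t.choose i : ℤ) * (t.choose k : ℤ)) •
              (V k i - V k (i + 1)) := Finset.sum_comm
      _ = ∑ k ∈ range (t + 1), ((-1 : ℤ) ^ k * (t.choose k : ℤ)) •
            ∑ i ∈ range (t + 1), ((-1 : ℤ) ^ i * (t.choose i : ℤ)) • (V k i - V k (i + 1)) := by
          refine Finset.sum_congr rfl fun k _ => ?_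
          rw [Finset.smul_sum]
          refine Finset.sum_congr rfl fun i _ => ?_
          rw [smul_smul]
          exact smulcongr _ _ _ _ (by rw [pow_add]; ring) rfl
      _ = ∑ k ∈ range (t + 1), ((-1 : ℤ) ^ k * (t.choose k : ℤ)) • G k := by
          refine Finset.sum_congr rfl fun k _ => ?_
          congr 1
          exact pascal_sum t (fun i => V k i)
  have hsym : ∀ k, k ≤ t + 1 → G ((t + 1) - k) = ((-1 : ℤ) ^ (t + 1)) • G k := by
    intro k hk
    rw [hG]
    simp only
    rw [Finset.smul_sum]
    rw [← Finset.sum_range_reflect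
      (fun i => ((-1 : ℤ) ^ i * ((t + 1).choose i : ℤ)) • V (t + 1 - k) i) (t + 2)]
    refine Finset.sum_congr rfl fun i hi => ?_
    rw [Finset.mem_range] at hi
    rw [show t + 2 - 1 - i = t + 1 - i by omega]
    have hcs : (t + 1).choose (t + 1 - i) = (t + 1).choose i :=
      Nat.choose_symm (by omega)
    have harg : V (t + 1 - k) (t + 1 - i)
        = H (-((((t : ℤ) + 1) - 2 * (i : ℤ)) * j' + (((t : ℤ) + 1) - 2 * (k : ℤ)) * l')) := by
      simp only [hV]
      refine congrArg H ?_
      have c1 : (((t + 1 - i : ℕ)) : ℤ) = (t : ℤ) + 1 - i := by omega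
      have c2 : (((t + 1 - k : ℕ)) : ℤ) = (t : ℤ) + 1 - k := by omega
      rw [c1, c2]
      ring
    rw [harg, hHneg, hcs, smul_smul]
    refine smulcongr _ _ _ _ ?_ rfl
    have hp : ((-1 : ℤ)) ^ (t + 1 - i) = (-1) ^ (t + 1) * (-1) ^ i := by
      rw [← pow_add]
      exact neg_one_pow_congr_mod _ _ (by omega)
    rw [hp]
    ring
  have hfold := fold_sum (t + 1) (by omega) G hsym
  simp only [Nat.add_sub_cancel] at hfold ⊢
  rw [hA, hfold]
  congr 1
  · refine Finset.sum_congr rfl fun k _ => ?_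
    rw [hG]
    simp only
    rw [Finset.smul_sum]
    refine Finset.sum_congr rfl fun i _ => ?_
    rw [smul_smul]
    simp only [hV]
    exact smulcongr _ _ _ _ (by rw [pow_add]; ring)
      (congrArg H (by push_cast; ring))
  · split_ifs with h
    · rw [hG]
      simp only
      rw [Finset.smul_sum]
      refine Finset.sum_congr rfl fun i _ => ?_
      rw [smul_smul]
      simp only [hV]
      have hz : ((t : ℤ) + 1 - 2 * (((t + 1) / 2 : ℕ) : ℤ)) = 0 := by
        rw [Nat.even_iff] at h
        omega
      refine smulcongr _ _ _ _ (by rw [pow_add]; ring) ?_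
      refine congrArg H ?_
      rw [hz, zero_mul, add_zero]
      push_cast
      ring
    · rfl

end
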